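/- Let H be a complex separable Hilbert space, (g̃_k)_{k∈ℕ} an orthonormal basis of H, and W a dense subspace. For any n ∈ ℕ and ε > 0, there exist g₁,…,g_n ∈ W which form an orthonormal system in H and satisfy ‖g_k − g̃_k‖ ≤ c_n ε for k = 1,…,n, where c_n is a constant depending only on n. -/

import Mathlib

open Finset Submodule Filter InnerProductSpace

local notation "⟪" x ", " y "⟫" => @inner ℂ _ _ x y

/-- In a complex separable Hilbert space with Hilbert basis `(g̃_k)` and dense subspace `W`,
for each `n` there is a constant `c_n` such that for every `ε > 0` one can find an
orthonormal system `g₁,…,g_n` in `W` with `‖g_k − g̃_k‖ ≤ c_n ε`. -/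
theorem stmt14 {H : Type*} [NormedAddCommGroup H] [InnerProductSpace ℂ H]
    [CompleteSpace H] (b : HilbertBasis ℕ ℂ H) (W : Submodule ℂ H)
    (hW : Dense (W : Set H)) (n : ℕ) :
    ∃ c : ℝ, ∀ ε : ℝ, 0 < ε → ∃ g : Fin n → H,
      (∀ k, g k ∈ W) ∧ Orthonormal ℂ g ∧ ∀ k : Fin n, ‖g k - b (k : ℕ)‖ ≤ c * ε := by
  letI : WellFoundedLT (Fin n) := inferInstance
  refine ⟨1, fun ε hε => ?_⟩
  set p : Fin n → H := fun k => b (k : ℕ) with hp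
  have hpon : Orthonormal ℂ p := b.orthonormal.comp _ Fin.val_injective
  have hgs_p : gramSchmidt ℂ p = p := by
    apply gramSchmidt_of_orthogonal
    intro i j hij
    exact hpon.2 hij
  have hnorm1 : ∀ i, ‖p i‖ = 1 := hpon.1
  -- continuity of gramSchmidt at p
  have hcont' : ∀ m : ℕ, ∀ i : Fin n, i.val ≤ m →
      ContinuousAt (fun v : Fin n → H => gramSchmidt ℂ v i) p := by
    intro m
    induction m with
    | zero =>
      intro i hi
      have heq : (fun v : Fin n → H => gramSchmidt ℂ v i) = fun v => v i := by
        funext v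
        rw [gramSchmidt_def]
        have : Finset.Iio i = ∅ := by
          ext j
          simp only [Finset.mem_Iio, Finset.notMem_empty, iff_false, not_lt, Fin.le_def]
          omega
        rw [this, Finset.sum_empty, sub_zero]
      rw [heq]
      exact (continuous_apply i).continuousAt
    | succ m ih =>
      intro i hi
      have heq : (fun v : Fin n → H => gramSchmidt ℂ v i) =
          fun v => v i - ∑ j ∈ Finset.Iio i,
            (⟪gramSchmidt ℂ v j, v i⟫ / ((‖gramSchmidt ℂ v j‖ ^ 2 : ℝ) : ℂ)) •
              gramSchmidt ℂ v j := by
        funext v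
        rw [gramSchmidt_def]
        congr 1
        refine Finset.sum_congr rfl fun j _ => ?_
        rw [starProjection_singleton]
        rfl
      rw [heq]
      refine ContinuousAt.sub (continuous_apply i).continuousAt ?_
      refine tendsto_finset_sum _ fun j hj => ?_
      have hjm : j.val ≤ m := by
        have := Finset.mem_Iio.mp hj
        have := Fin.lt_def.mp this
        omega
      have hG : ContinuousAt (fun v : Fin n → H => gramSchmidt ℂ v j) p := ih j hjm
      have hGp : gramSchmidt ℂ p j = p j := congrFun hgs_p j
      have hden : ContinuousAt
          (fun v : Fin n → H => ((‖gramSchmidt ℂ v j‖ ^ 2 : ℝ) : ℂ)) p :=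
        Complex.continuous_ofReal.continuousAt.comp (hG.norm.pow 2)
      have hdne : ((‖gramSchmidt ℂ p j‖ ^ 2 : ℝ) : ℂ) ≠ 0 := by
        rw [hGp, hnorm1 j]
        norm_num
      have hnum : ContinuousAt (fun v : Fin n → H => ⟪gramSchmidt ℂ v j, v i⟫) p :=
        ContinuousAt.inner hG (continuous_apply i).continuousAt
      exact (hnum.div hden hdne).smul hG
  have hcont : ∀ i : Fin n, ContinuousAt (fun v : Fin n → H => gramSchmidt ℂ v i) p :=
    fun i => hcont' i.val i le_rfl
  -- continuity and value of gramSchmidtNormed at p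
  have hvalN : ∀ i, gramSchmidtNormed ℂ p i = p i := by
    intro i
    rw [gramSchmidtNormed, congrFun hgs_p i, hnorm1 i]
    simp
  have hcontN : ∀ i : Fin n, ContinuousAt (fun v : Fin n → H => gramSchmidtNormed ℂ v i) p := by
    intro i
    have hne : ((‖gramSchmidt ℂ p i‖ : ℝ) : ℂ) ≠ 0 := by
      rw [congrFun hgs_p i, hnorm1 i]; norm_num
    have : ContinuousAt (fun v : Fin n → H =>
        ((‖gramSchmidt ℂ v i‖ : ℝ) : ℂ)⁻¹ • gramSchmidt ℂ v i) p :=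
      ((Complex.continuous_ofReal.continuousAt.comp (hcont i).norm).inv₀ hne).smul (hcont i)
    exact this
  set ε' : ℝ := min ε (1/2) with hε'def
  have hε' : 0 < ε' := lt_min hε (by norm_num)
  -- eventually all coordinates close
  have hev : ∀ᶠ v in nhds p, ∀ i, ‖gramSchmidtNormed ℂ v i - p i‖ < ε' := by
    rw [Filter.eventually_all]
    intro i
    have ht : Tendsto (fun v : Fin n → H => gramSchmidtNormed ℂ v i) (nhds p)
        (nhds (p i)) := by
      have := (hcontN i).tendsto
      rwa [show gramSchmidtNormed ℂ p i = p i from hvalN i] at this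
    have := ht (Metric.ball_mem_nhds (p i) hε')
    filter_upwards [this] with v hv
    simp only [Set.mem_preimage, Metric.mem_ball, dist_eq_norm] at hv
    exact hv
  obtain ⟨δ, hδ, hδball⟩ := Metric.eventually_nhds_iff.mp hev
  -- choose approximants in W
  have hchoice : ∀ i : Fin n, ∃ w : H, w ∈ W ∧ dist w (p i) < δ := by
    intro i
    obtain ⟨w, hw1, hw2⟩ := Metric.dense_iff.mp hW (p i) δ hδ
    exact ⟨w, hw2, by rwa [Metric.mem_ball] at hw1⟩
  choose v hvW hvclose using hchoice
  have hvp : dist v p < δ := (dist_pi_lt_iff hδ).mpr hvclose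
  have hclose : ∀ i, ‖gramSchmidtNormed ℂ v i - p i‖ < ε' := hδball hvp
  set g : Fin n → H := fun i => gramSchmidtNormed ℂ v i with hgdef
  have hgne : ∀ i, gramSchmidtNormed ℂ v i ≠ 0 := by
    intro i h0
    have := hclose i
    rw [h0, zero_sub, norm_neg, hnorm1 i] at this
    have : (1:ℝ) ≤ 1/2 := le_trans (le_of_lt this) (min_le_right _ _)
    norm_num at this
  refine ⟨g, ?_, ?_, ?_⟩
  · intro k
    have hmem : gramSchmidt ℂ v k ∈ span ℂ (v '' Set.Iic k) :=
      gramSchmidt_mem_span ℂ v le_rfl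
    have hle : span ℂ (v '' Set.Iic k) ≤ W := by
      rw [Submodule.span_le]
      rintro x ⟨j, -, rfl⟩
      exact hvW j
    have : gramSchmidt ℂ v k ∈ W := hle hmem
    rw [hgdef]
    simpa [gramSchmidtNormed] using W.smul_mem _ this
  · have hON := gramSchmidtNormed_orthonormal' (𝕜 := ℂ) v
    rw [orthonormal_iff_ite] at hON ⊢
    intro i j
    have := hON ⟨i, hgne i⟩ ⟨j, hgne j⟩
    simpa [Subtype.ext_iff] using this
  · intro k
    have := hclose k
    have h1 : ‖g k - b (k : ℕ)‖ < ε' := this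
    calc ‖g k - b (k : ℕ)‖ ≤ ε' := le_of_lt h1
      _ ≤ ε := min_le_left _ _
      _ = 1 * ε := (one_mul ε).symm
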